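/- Let G be a finitely generated group in which every element has finitely many conjugates (an FC-group). Then the quotient G/Z(G) of G by its center is finite if and only if G is an FC-group; in particular, for finitely generated G, G is an FC-group iff G/Z(G) is finite. -/

import Mathlib

private noncomputable def classEquiv {G : Type*} [Group G] (g : G) :
    (G ⧸ Subgroup.centralizer ({g} : Set G)) ≃ {h : G | IsConj g h} := by
  refine Equiv.ofBijective
    (fun q => Quotient.liftOn' q
      (fun x => (⟨x * g * x⁻¹, isConj_iff.2 ⟨x, rfl⟩⟩ : {h : G | IsConj g h}))
      (fun x y hxy => ?_)) ⟨?_, ?_⟩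
  · have h : x⁻¹ * y * g = g * (x⁻¹ * y) :=
      (Subgroup.mem_centralizer_singleton_iff.1
        (QuotientGroup.leftRel_apply.1 hxy))
    ext
    have h2 : x * (x⁻¹ * y * g) * y⁻¹ = x * (g * (x⁻¹ * y)) * y⁻¹ := by rw [h]
    group at h2
    simpa using h2.symm
  · intro q₁ q₂
    refine Quotient.inductionOn₂' q₁ q₂ (fun x y h => ?_)
    have h' : x * g * x⁻¹ = y * g * y⁻¹ := congrArg Subtype.val h
    apply Quotient.sound'
    refine QuotientGroup.leftRel_apply.2 (Subgroup.mem_centralizer_singleton_iff.2 ?_)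
    have : g * (x⁻¹ * y) = x⁻¹ * (y * g * y⁻¹) * y := by
      rw [← h']; group
    rw [this]; group
  · rintro ⟨h, hh⟩
    obtain ⟨c, hc⟩ := isConj_iff.1 hh
    exact ⟨QuotientGroup.mk c, Subtype.ext hc⟩

private theorem centralizer_zpowers_finiteIndex {G : Type*} [Group G] (g : G)
    (h : {h : G | IsConj g h}.Finite) :
    (Subgroup.centralizer (Subgroup.zpowers g : Set G)).FiniteIndex := by
  have : Finite {h : G | IsConj g h} := h
  have : Finite (G ⧸ Subgroup.centralizer ({g} : Set G)) :=
    Finite.of_equiv _ (classEquiv g).symm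
  have h1 : (Subgroup.centralizer ({g} : Set G)).FiniteIndex :=
    Subgroup.finiteIndex_of_finite_quotient
  refine Subgroup.finiteIndex_of_le (H := Subgroup.centralizer ({g} : Set G)) (fun x hx => ?_)
  rw [Subgroup.mem_centralizer_iff]
  rintro y ⟨n, rfl⟩
  exact Commute.eq (Commute.zpow_left
    (((Subgroup.mem_centralizer_singleton_iff.1 hx).symm : g * x = x * g)) n)

theorem stmt_11 {G : Type*} [Group G] (hfg : Group.FG G) :
    (∀ g : G, {h : G | IsConj g h}.Finite) ↔ Finite (G ⧸ Subgroup.center G) := by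
  constructor
  · intro hFC
    obtain ⟨S, hS⟩ := hfg.1
    have hcen := Subgroup.center_eq_infi' hS
    have : (Subgroup.center G).FiniteIndex := by
      rw [hcen]
      exact Subgroup.finiteIndex_iInf fun s =>
        (haveI := centralizer_zpowers_finiteIndex (s : G) (hFC s);
          Subgroup.finiteIndex_of_le
            (Subgroup.centralizer_le (Set.singleton_subset_iff.2 (Subgroup.mem_zpowers _))))
    exact Subgroup.finite_quotient_of_finiteIndex
  · intro hfin g
    have h1 : (Subgroup.center G).FiniteIndex :=
      Subgroup.finiteIndex_of_finite_quotient
    have h2 : (Subgroup.centralizer ({g} : Set G)).FiniteIndex :=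
      Subgroup.finiteIndex_of_le (Subgroup.center_le_centralizer _)
    have : Finite (G ⧸ Subgroup.centralizer ({g} : Set G)) :=
      Subgroup.finite_quotient_of_finiteIndex
    have : Finite {h : G | IsConj g h} := Finite.of_equiv _ (classEquiv g)
    exact Set.toFinite _
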